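/- If A is a 2-zpd algebra, then every derivation δ: A → A has image contained in the linear span of square-zero elements of A. -/

import Mathlib

def IsZpd (F A : Type*) [Field F] [Ring A] [Algebra F A] : Prop :=
  ∀ φ : A →ₗ[F] A →ₗ[F] F, (∀ x y : A, x * y = 0 → φ x y = 0) →
    ∃ τ : A →ₗ[F] F, ∀ x y : A, φ x y = τ (x * y)

def Is2Zpd (F A : Type*) [Field F] [Ring A] [Algebra F A] : Prop :=
  ∀ φ : A →ₗ[F] A →ₗ[F] F, (∀ x y : A, x * y = 0 → y * x = 0 → φ x y = 0) →
    ∃ τ₁ τ₂ : A →ₗ[F] F, ∀ x y : A, φ x y = τ₁ (x * y) + τ₂ (y * x)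

def IsZLpd (F A : Type*) [Field F] [Ring A] [Algebra F A] : Prop :=
  ∀ φ : A →ₗ[F] A →ₗ[F] F, (∀ x y : A, x * y = y * x → φ x y = 0) →
    ∃ τ : A →ₗ[F] F, ∀ x y : A, φ x y = τ (x * y - y * x)

theorem two_sided_zpd_derivation_square_zero (F A : Type*) [Field F] [Ring A]
    [Algebra F A] (h : Is2Zpd F A) (δ : A →ₗ[F] A)
    (hδ : ∀ x y : A, δ (x * y) = δ x * y + x * δ y) :
    ∀ w : A, δ w ∈ Submodule.span F {a : A | a * a = 0} := by
  intro w
  set V : Submodule F A := Submodule.span F {a : A | a * a = 0} with hV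
  have hδ1 : δ (1 : A) = 0 := by
    have h1 := hδ 1 1
    rw [one_mul, mul_one] at h1
    have h2 := h1.symm
    rw [add_eq_left, one_mul] at h2
    exact h2
  rw [← Submodule.Quotient.mk_eq_zero,
    ← Module.forall_dual_apply_eq_zero_iff (R := F)]
  intro g
  set f : A →ₗ[F] F := g.comp V.mkQ with hf
  have hfV : ∀ a : A, a * a = 0 → f a = 0 := by
    intro a ha
    have hm : V.mkQ a = 0 := (Submodule.Quotient.mk_eq_zero V).2
      (Submodule.subset_span ha)
    simp [hf, hm]
  set φ : A →ₗ[F] A →ₗ[F] F := LinearMap.mk₂ F (fun x y => f (δ x * y))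
    (by intro x₁ x₂ y; simp [add_mul])
    (by intro c x y; simp [smul_mul_assoc])
    (by intro x y₁ y₂; simp [mul_add])
    (by intro c x y; simp [mul_smul_comm]) with hφ
  have key : ∀ x y : A, x * y = 0 → y * x = 0 → φ x y = 0 := by
    intro x y hxy hyx
    have h1 : δ x * y = -(x * δ y) := by
      have h' := hδ x y; rw [hxy, map_zero] at h'
      exact eq_neg_of_add_eq_zero_left h'.symm
    have h2 : δ y * x = -(y * δ x) := by
      have h' := hδ y x; rw [hyx, map_zero] at h'
      exact eq_neg_of_add_eq_zero_left h'.symm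
    have hsq : (δ x * y) * (δ x * y) = 0 := by
      have hyδx : y * δ x = -(δ y * x) := by rw [h2, neg_neg]
      calc (δ x * y) * (δ x * y)
        _ = δ x * (-(δ y * x)) * y := by rw [mul_assoc, mul_assoc, ← mul_assoc y, hyδx]
        _ = -(δ x * δ y * (x * y)) := by noncomm_ring
        _ = 0 := by rw [hxy, mul_zero, neg_zero]
    simpa [hφ] using hfV _ hsq
  obtain ⟨τ₁, τ₂, hτ⟩ := h φ key
  have e1 : f (δ w) = τ₁ w + τ₂ w := by
    have := hτ w 1
    simpa [hφ] using this
  have e2 : (0 : F) = τ₁ w + τ₂ w := by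
    have := hτ 1 w
    simpa [hφ, hδ1] using this
  have : f (δ w) = 0 := by rw [e1, ← e2]
  simpa [hf] using this
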